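/- arXiv:2409.14242 — 3 statements merged into one kernel-verified Lean document; each statement's English description precedes it below -/
import Mathlib

section
/- Let H(z), G(z) be row vectors of length q of Laurent polynomials on T^n, and suppose there exist Laurent polynomials k_1,…,k_J and l_1,…,l_J such that 1 − H(z)G(z)* = Σ_{j=1}^J k_j(z) · conj(l_j(z)) for all z ∈ T^n. Then the extended Laplacian pyramid matrices satisfy Φ_{g,h,[k_1,…,k_J]}(z)* · Φ_{h,g,[l_1,…,l_J]}(z) = I_q for all z ∈ T^n. -/
open Matrix Complex

/-- The extended Laplacian pyramid matrix `Φ_{h,g,[l_1,…,l_J]}(z)`: row blocks `H(z)`;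
`conj(l_j(z))·H(z)` for `j = 1,…,J`; and the `q × q` block `I_q - G(z)* H(z)`.
The data are given by their values at a fixed point `z` of the torus. -/
def extLpMatrix (q J : ℕ) (H G : Fin q → ℂ) (l : Fin J → ℂ) :
    Matrix (Fin 1 ⊕ Fin J ⊕ Fin q) (Fin q) ℂ :=
  Matrix.of (Sum.elim (fun _ j => H j)
    (Sum.elim (fun j' j => (starRingEnd ℂ) (l j') * H j)
      (fun i j => (if i = j then (1 : ℂ) else 0) - (starRingEnd ℂ) (G i) * H j)))

/-- If the SVP condition `1 - H(z)G(z)* = Σ_j k_j(z) conj(l_j(z))` holds on the `n`-torus,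
then `Φ_{g,h,[k_1,…,k_J]}(z)* Φ_{h,g,[l_1,…,l_J]}(z) = I_q` on the `n`-torus. -/
theorem stmt1 (n q J : ℕ) (H G : (Fin n → ℂ) → Fin q → ℂ)
    (k l : Fin J → (Fin n → ℂ) → ℂ)
    (hSVP : ∀ z : Fin n → ℂ, (∀ i, ‖z i‖ = 1) →
      1 - ∑ j, H z j * (starRingEnd ℂ) (G z j) = ∑ j, k j z * (starRingEnd ℂ) (l j z)) :
    ∀ z : Fin n → ℂ, (∀ i, ‖z i‖ = 1) →
      (extLpMatrix q J (G z) (H z) (fun j => k j z)).conjTranspose *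
        extLpMatrix q J (H z) (G z) (fun j => l j z) = 1 := by
  intro z hz
  have hS := hSVP z hz
  ext a b
  simp only [extLpMatrix, Matrix.mul_apply, Matrix.conjTranspose_apply, Matrix.of_apply,
    Fintype.sum_sum_type, Sum.elim_inl, Sum.elim_inr, Matrix.one_apply]
  simp only [Complex.star_def, map_sub, _root_.map_mul, Complex.conj_conj,
    apply_ite (starRingEnd ℂ), _root_.map_one, map_zero, Finset.sum_const, Finset.card_univ,
    Fintype.card_fin, one_smul]
  have hd : ∀ i : Fin q,
      ((if i = a then (1:ℂ) else 0) - H z i * (starRingEnd ℂ) (G z a)) *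
        ((if i = b then (1:ℂ) else 0) - (starRingEnd ℂ) (G z i) * H z b)
      = (if i = a then (1:ℂ) else 0) * (if i = b then (1:ℂ) else 0)
        - (if i = a then (1:ℂ) else 0) * ((starRingEnd ℂ) (G z i) * H z b)
        - (if i = b then (1:ℂ) else 0) * (H z i * (starRingEnd ℂ) (G z a))
        + (H z i * (starRingEnd ℂ) (G z i)) * ((starRingEnd ℂ) (G z a) * H z b) := by
    intro i; ring
  rw [Finset.sum_congr rfl (fun i _ => hd i)]
  simp only [Finset.sum_add_distrib, Finset.sum_sub_distrib, Finset.sum_ite_eq',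
    Finset.mem_univ, if_true, ← Finset.sum_mul]
  have e1 : ∑ x : Fin J, k x z * (starRingEnd ℂ) (G z a) * ((starRingEnd ℂ) (l x z) * H z b)
      = (∑ j, k j z * (starRingEnd ℂ) (l j z)) * ((starRingEnd ℂ) (G z a) * H z b) := by
    rw [Finset.sum_mul]; exact Finset.sum_congr rfl (fun x _ => by ring)
  rw [e1, ← hS]
  simp only [ite_mul, mul_ite, one_mul, zero_mul, mul_one, mul_zero, Finset.sum_ite_eq',
    Finset.mem_univ, if_true]
  ring_nf
  simp [eq_comm]
end

section
/- Suppose lowpass filters h and g (with polyphase representations H(z), G(z) as length-q row vectors of Laurent polynomials) satisfy the SVP condition 1 − H(z)G(z)* = Σ_{j=1}^J k_j(z) conj(l_j(z)) on T^n, with k_j(1,…,1) = l_j(1,…,1) = 0. Define highpass filters ĥ_j(ω) := ĥ(ω)·conj(l_j(e^{iΛ^Tω})) for j ≤ J, ĥ_{J+1+m}(ω) := q^{−1/2} e^{iν_m·ω} − ĥ(ω)·conj(G_{ν_m}(e^{iΛ^Tω})), and dually ĥ_j^d(ω) := ĝ(ω)·conj(k_j(e^{iΛ^Tω})), ĥ_{J+1+m}^d(ω)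 := q^{−1/2} e^{iν_m·ω} − ĝ(ω)·conj(H_{ν_m}(e^{iΛ^Tω})). Then for all γ ∈ Γ* and ω: ĥ(ω)conj(ĝ(ω+γ)) + Σ_{i=1}^{J+q} ĥ_i(ω)conj(ĥ_i^d(ω+γ)) = δ_{0γ}. -/
open Complex Real
open scoped Classical

/-- The mask `f̂(ω) = (1/√q) Σ_m f(m) e^{-iω·m}` of a finitely supported filter. -/
noncomputable def filterHat (n q : ℕ) (f : (Fin n → ℤ) → ℝ) (ω : Fin n → ℝ) : ℂ :=
  (1 / Real.sqrt q : ℝ) *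
    ∑ᶠ m : Fin n → ℤ, (f m : ℂ) * Complex.exp (-Complex.I * ((∑ i, ω i * (m i : ℝ) : ℝ) : ℂ))

/-- The z-transform `F_ν(z)` of the polyphase component `f_ν(m) = f(Λm - ν)`. -/
noncomputable def polyZ (n : ℕ) (Λ : Matrix (Fin n) (Fin n) ℤ) (f : (Fin n → ℤ) → ℝ)
    (ν : Fin n → ℤ) (z : Fin n → ℂ) : ℂ :=
  ∑ᶠ m : Fin n → ℤ, (f (Λ.mulVec m - ν) : ℂ) * ∏ j, z j ^ (-(m j))

/-- The point `e^{iΛᵀω}` of the torus, componentwise `(e^{i(Λᵀω)_j})_j`. -/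
noncomputable def expVec (n : ℕ) (Λ : Matrix (Fin n) (Fin n) ℤ) (ω : Fin n → ℝ) :
    Fin n → ℂ :=
  fun j => Complex.exp (Complex.I * ((∑ i, (Λ i j : ℝ) * ω i : ℝ) : ℂ))

lemma aux_mulVec_inj {n : ℕ} (Λ : Matrix (Fin n) (Fin n) ℤ) (hd : Λ.det ≠ 0) :
    Function.Injective Λ.mulVec := by
  intro v w hvw
  have h1 : (Λ.adjugate * Λ).mulVec v = (Λ.adjugate * Λ).mulVec w := by
    rw [← Matrix.mulVec_mulVec, ← Matrix.mulVec_mulVec, hvw]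
  rw [Matrix.adjugate_mul] at h1
  funext i
  have h2 := congrFun h1 i
  simp [Matrix.smul_mulVec, Matrix.one_mulVec, Pi.smul_apply, smul_eq_mul] at h2
  tauto

lemma aux_prod_zpow {n : ℕ} (Λ : Matrix (Fin n) (Fin n) ℤ) (ω : Fin n → ℝ)
    (m : Fin n → ℤ) :
    (∏ j, expVec n Λ ω j ^ (-(m j)))
      = Complex.exp (-Complex.I * ((∑ i, ω i * ((Λ.mulVec m) i : ℝ) : ℝ) : ℂ)) := by
  have h1 : ∀ j : Fin n, expVec n Λ ω j ^ (-(m j))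
      = Complex.exp (((-(m j) : ℤ) : ℂ) * (Complex.I * ((∑ i, (Λ i j : ℝ) * ω i : ℝ) : ℂ))) := by
    intro j
    rw [expVec, Complex.exp_int_mul]
  rw [Finset.prod_congr rfl (fun j _ => h1 j), ← Complex.exp_sum]
  congr 1
  have h2 : ∀ j : Fin n, ((-(m j) : ℤ) : ℂ) * (Complex.I * ((∑ i, (Λ i j : ℝ) * ω i : ℝ) : ℂ))
      = -Complex.I * ∑ i, (ω i : ℂ) * ((Λ i j : ℂ) * (m j : ℂ)) := by
    intro j
    push_cast
    rw [Finset.mul_sum, Finset.mul_sum]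
    rw [Finset.mul_sum]
    apply Finset.sum_congr rfl
    intro i _
    ring
  rw [Finset.sum_congr rfl (fun j _ => h2 j), ← Finset.mul_sum]
  congr 1
  push_cast
  rw [Finset.sum_comm]
  apply Finset.sum_congr rfl
  intro i _
  rw [Matrix.mulVec, dotProduct]
  push_cast
  rw [Finset.mul_sum]

lemma aux_polyZ {n : ℕ} (Λ : Matrix (Fin n) (Fin n) ℤ) (f : (Fin n → ℤ) → ℝ)
    (ν : Fin n → ℤ) (ω : Fin n → ℝ) :
    polyZ n Λ f ν (expVec n Λ ω)
      = ∑ᶠ m : Fin n → ℤ, (f (Λ.mulVec m - ν) : ℂ) *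
          Complex.exp (-Complex.I * ((∑ i, ω i * ((Λ.mulVec m) i : ℝ) : ℝ) : ℂ)) := by
  rw [polyZ]
  exact finsum_congr fun m => by rw [aux_prod_zpow]

lemma aux_F2 {n q : ℕ} (hq : 0 < q) (Λ : Matrix (Fin n) (Fin n) ℤ) (hd : Λ.det ≠ 0)
    (Γ : Fin q → (Fin n → ℤ))
    (hΓ : ∀ m : Fin n → ℤ, ∃! t : Fin q, ∃ v : Fin n → ℤ, m = Γ t + Λ.mulVec v)
    (f : (Fin n → ℤ) → ℝ) (hf : (Function.support f).Finite) (ω : Fin n → ℝ) :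
    filterHat n q f ω = ∑ m : Fin q,
      ((1 / Real.sqrt q : ℝ) : ℂ) *
        Complex.exp (Complex.I * ((∑ i, (Γ m i : ℝ) * ω i : ℝ) : ℂ)) *
        polyZ n Λ f (Γ m) (expVec n Λ ω) := by
  classical
  have hinj := aux_mulVec_inj Λ hd
  -- decomposition functions
  have hΓ' := hΓ
  simp only [ExistsUnique] at hΓ'
  choose T hT using hΓ'
  choose V hV using fun m => (hT m).1
  have hU : ∀ (m : Fin n → ℤ) (t : Fin q) (v : Fin n → ℤ),
      m = Γ t + Λ.mulVec v → t = T m := fun m t v hv => (hT m).2 t ⟨v, hv⟩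
  set r : ℂ := ((1 / Real.sqrt q : ℝ) : ℂ) with hr
  -- finsets
  set S : Finset (Fin n → ℤ) := hf.toFinset with hS
  have hTfin : ∀ t : Fin q, ((fun v => Λ.mulVec v - Γ t) ⁻¹' (Function.support f)).Finite := by
    intro t
    apply Set.Finite.preimage _ hf
    intro x _ y _ hxy
    simp only at hxy
    exact hinj (by linear_combination (norm := module) hxy)
  set Tt : Fin q → Finset (Fin n → ℤ) := fun t => (hTfin t).toFinset with hTt
  -- rewrite filterHat as finset sum
  have e1 : filterHat n q f ω = ∑ m ∈ S, r * ((f m : ℂ) *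
      Complex.exp (-Complex.I * ((∑ i, ω i * (m i : ℝ) : ℝ) : ℂ))) := by
    rw [filterHat, ← Finset.mul_sum]
    congr 1
    apply finsum_eq_sum_of_support_subset
    intro m hm
    simp only [Function.mem_support] at hm
    have : f m ≠ 0 := by
      intro h0; apply hm; simp [h0]
    simpa [hS] using this
  -- rewrite polyZ as finset sum
  have e2 : ∀ t : Fin q, polyZ n Λ f (Γ t) (expVec n Λ ω)
      = ∑ v ∈ Tt t, (f (Λ.mulVec v - Γ t) : ℂ) *
          Complex.exp (-Complex.I * ((∑ i, ω i * ((Λ.mulVec v) i : ℝ) : ℝ) : ℂ)) := by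
    intro t
    rw [aux_polyZ]
    apply finsum_eq_sum_of_support_subset
    intro v hv
    simp only [Function.mem_support] at hv
    have : f (Λ.mulVec v - Γ t) ≠ 0 := by
      intro h0; apply hv; simp [h0]
    simpa [hTt, Set.Finite.mem_toFinset] using this
  rw [e1]
  simp only [e2, Finset.mul_sum]
  rw [Finset.sum_sigma']
  refine (Finset.sum_nbij' (fun m => (⟨T (-m), -(V (-m))⟩ : Σ _ : Fin q, (Fin n → ℤ)))
    (fun p => Λ.mulVec p.2 - Γ p.1) ?_ ?_ ?_ ?_ ?_)
  · -- maps S into sigma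
    intro m hm
    have hdec := hV (-m)
    have hmm : Λ.mulVec (-(V (-m))) - Γ (T (-m)) = m := by
      have := hdec
      have : Λ.mulVec (-(V (-m))) = -(Λ.mulVec (V (-m))) := by
        simp [Matrix.mulVec_neg]
      rw [this]
      linear_combination (norm := module) hdec
    simp only [Finset.mem_sigma, Finset.mem_univ, true_and]
    simp only [hTt, Set.Finite.mem_toFinset, Set.mem_preimage]
    rw [hmm]
    simpa [hS] using hm
  · -- maps sigma into S
    rintro ⟨t, v⟩ hp
    simp only [Finset.mem_sigma, Finset.mem_univ, true_and, hTt,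
      Set.Finite.mem_toFinset, Set.mem_preimage] at hp
    simpa [hS] using hp
  · -- left inverse : j (i m) = m  (i : S → sigma here first arg)
    intro m _
    dsimp only
    have hdec := hV (-m)
    have : Λ.mulVec (-(V (-m))) = -(Λ.mulVec (V (-m))) := by simp [Matrix.mulVec_neg]
    rw [this]
    linear_combination (norm := module) hdec
  · -- right inverse : i (j p) = p
    rintro ⟨t, v⟩ _
    dsimp only
    have hm : -(Λ.mulVec v - Γ t) = Γ t + Λ.mulVec (-v) := by
      simp [Matrix.mulVec_neg]; abel
    have ht : t = T (-(Λ.mulVec v - Γ t)) := hU _ t (-v) hm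
    have hveq : V (-(Λ.mulVec v - Γ t)) = -v := by
      apply hinj
      have h2 := hV (-(Λ.mulVec v - Γ t))
      rw [← ht] at h2
      have : Γ t + Λ.mulVec (V (-(Λ.mulVec v - Γ t))) = Γ t + Λ.mulVec (-v) := by
        rw [← h2, hm]
      exact add_left_cancel this
    refine Sigma.ext ?_ ?_
    · exact ht.symm
    · rw [hveq]; simp
  · -- terms agree
    intro m hm
    dsimp only
    set t := T (-m) with hts
    set v := -(V (-m)) with hvs
    have hdec := hV (-m)
    have hmm : Λ.mulVec v - Γ t = m := by
      have hmv : Λ.mulVec v = -(Λ.mulVec (V (-m))) := by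
        rw [hvs]; simp [Matrix.mulVec_neg]
      rw [hmv]
      linear_combination (norm := module) hdec
    rw [← hmm]
    have hexp : Complex.exp (-Complex.I * ((∑ i, ω i * ((Λ.mulVec v - Γ t) i : ℝ) : ℝ) : ℂ))
        = Complex.exp (Complex.I * ((∑ i, (Γ t i : ℝ) * ω i : ℝ) : ℂ)) *
          Complex.exp (-Complex.I * ((∑ i, ω i * ((Λ.mulVec v) i : ℝ) : ℝ) : ℂ)) := by
      rw [← Complex.exp_add]
      congr 1
      push_cast [Pi.sub_apply]
      simp only [mul_sub]
      rw [Finset.sum_sub_distrib]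
      rw [show (∑ x : Fin n, ((Γ t x : ℤ) : ℂ) * ((ω x : ℝ) : ℂ))
          = ∑ x : Fin n, ((ω x : ℝ) : ℂ) * ((Γ t x : ℤ) : ℂ)
        from Finset.sum_congr rfl fun i _ => mul_comm _ _]
      ring
    rw [hexp]
    ring

lemma aux_expVec_per {n : ℕ} (Λ : Matrix (Fin n) (Fin n) ℤ) (ω γ : Fin n → ℝ)
    (hmem : ∃ m : Fin n → ℤ, ∀ i, ∑ j, (Λ.transpose i j : ℝ) * γ j = 2 * π * (m i)) :
    expVec n Λ (fun i => ω i + γ i) = expVec n Λ ω := by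
  obtain ⟨m, hm⟩ := hmem
  funext j
  simp only [expVec]
  have hsum : (∑ i, (Λ i j : ℝ) * (ω i + γ i)) = (∑ i, (Λ i j : ℝ) * ω i) + 2 * π * (m j) := by
    rw [← hm j]
    simp only [Matrix.transpose_apply]
    rw [← Finset.sum_add_distrib]
    exact Finset.sum_congr rfl fun i _ => by ring
  rw [hsum]
  push_cast
  rw [mul_add, Complex.exp_add]
  have h1 : Complex.exp (Complex.I * (2 * (π : ℂ) * (m j : ℂ))) = 1 := by
    rw [show (Complex.I * (2 * (π : ℂ) * (m j : ℂ))) = (m j : ℤ) * (2 * (π : ℂ) * Complex.I)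
      by push_cast; ring, Complex.exp_int_mul_two_pi_mul_I]
  rw [h1, mul_one]

lemma aux_abs_expVec {n : ℕ} (Λ : Matrix (Fin n) (Fin n) ℤ) (ω : Fin n → ℝ) (j : Fin n) :
    ‖expVec n Λ ω j‖ = 1 := by
  simp [expVec, Complex.norm_exp]

lemma aux_char {n q : ℕ} (hq : 0 < q) (Λ : Matrix (Fin n) (Fin n) ℤ)
    (Γ : Fin q → (Fin n → ℤ)) (γstar : Fin q → (Fin n → ℝ))
    (hγ0 : γstar ⟨0, hq⟩ = 0)
    (hΓ : ∀ m : Fin n → ℤ, ∃! t : Fin q, ∃ v : Fin n → ℤ, m = Γ t + Λ.mulVec v)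
    (hmem : ∀ t : Fin q, ∃ m : Fin n → ℤ,
      ∀ i, ∑ j, (Λ.transpose i j : ℝ) * γstar t j = 2 * π * (m i))
    (hΓstar : ∀ x : Fin n → ℝ,
      (∃ m : Fin n → ℤ, ∀ i, ∑ j, (Λ.transpose i j : ℝ) * x j = 2 * π * (m i)) →
      ∃! t : Fin q, ∃ v : Fin n → ℤ, x = γstar t + fun i => 2 * π * (v i))
    (hd : Λ.det ≠ 0) (t : Fin q) (ht : γstar t ≠ 0) :
    ∑ m : Fin q, Complex.exp (-(Complex.I * ((∑ i, (Γ m i : ℝ) * γstar t i : ℝ) : ℂ))) = 0 := by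
  classical
  have hinj := aux_mulVec_inj Λ hd
  set γ : Fin n → ℝ := γstar t with hγ
  set χ : (Fin n → ℤ) → ℂ :=
    fun x => Complex.exp (-(Complex.I * ((∑ i, (x i : ℝ) * γ i : ℝ) : ℂ))) with hχ
  have hχadd : ∀ x y, χ (x + y) = χ x * χ y := by
    intro x y
    simp only [hχ]
    rw [← Complex.exp_add]
    congr 1
    push_cast [Pi.add_apply]
    simp only [add_mul]
    rw [Finset.sum_add_distrib]
    ring
  obtain ⟨mm, hmm⟩ := hmem t
  have hχΛ : ∀ w : Fin n → ℤ, χ (Λ.mulVec w) = 1 := by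
    intro w
    have hsum : (∑ i, ((Λ.mulVec w) i : ℝ) * γ i) = 2 * π * ((∑ j, w j * mm j : ℤ) : ℝ) := by
      have h1 : ∀ i : Fin n, ((Λ.mulVec w) i : ℝ) * γ i = ∑ j, (Λ i j : ℝ) * (w j : ℝ) * γ i := by
        intro i
        rw [Matrix.mulVec, dotProduct]
        push_cast
        rw [Finset.sum_mul]
      rw [Finset.sum_congr rfl fun i _ => h1 i, Finset.sum_comm]
      push_cast
      rw [Finset.mul_sum]
      apply Finset.sum_congr rfl
      intro j _
      have h2 := hmm j
      simp only [Matrix.transpose_apply] at h2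
      calc ∑ i, (Λ i j : ℝ) * (w j : ℝ) * γ i = (w j : ℝ) * ∑ i, (Λ i j : ℝ) * γ i := by
            rw [Finset.mul_sum]; exact Finset.sum_congr rfl fun i _ => by ring
        _ = (w j : ℝ) * (2 * π * (mm j : ℝ)) := by rw [h2]
        _ = 2 * π * ((w j : ℝ) * (mm j : ℝ)) := by ring
    simp only [hχ]
    rw [hsum]
    rw [show -(Complex.I * ((2 * π * ((∑ j, w j * mm j : ℤ) : ℝ) : ℝ) : ℂ))
        = ((-(∑ j, w j * mm j) : ℤ) : ℂ) * (2 * (π : ℂ) * Complex.I) by push_cast; ring]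
    exact Complex.exp_int_mul_two_pi_mul_I _
  -- nontriviality
  have hx : ∃ x : Fin n → ℤ, χ x ≠ 1 := by
    by_contra hc
    push_neg at hc
    have hγint : ∀ i : Fin n, ∃ vi : ℤ, γ i = 2 * π * vi := by
      intro i
      have h1 := hc (fun k => if k = i then (1 : ℤ) else 0)
      simp only [hχ] at h1
      have h2 : (∑ k, ((if k = i then (1 : ℤ) else 0 : ℤ) : ℝ) * γ k) = γ i := by
        rw [Finset.sum_congr rfl (fun k _ => by
          split_ifs with hk
          · subst hk; push_cast; rw [one_mul]
          · push_cast; rw [zero_mul] : ∀ k ∈ Finset.univ,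
            ((if k = i then (1 : ℤ) else 0 : ℤ) : ℝ) * γ k = if k = i then γ k else 0)]
        simp
      rw [h2] at h1
      rw [Complex.exp_eq_one_iff] at h1
      obtain ⟨kk, hkk⟩ := h1
      refine ⟨-kk, ?_⟩
      have h3 : Complex.I * ((γ i : ℂ)) = Complex.I * ((2 * π * ((-kk : ℤ) : ℝ) : ℝ) : ℂ) := by
        push_cast
        linear_combination -hkk
      have h4 := mul_left_cancel₀ Complex.I_ne_zero h3
      exact_mod_cast h4
    choose v hv using hγint
    obtain ⟨t', ht', huniq⟩ := hΓstar γ (hmem t)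
    have e1 : t = t' := huniq t ⟨0, by funext i; simp [hγ]⟩
    have e2 : (⟨0, hq⟩ : Fin q) = t' := huniq _ ⟨v, by funext i; simp [hγ0, Pi.add_apply, hv i]⟩
    refine ht ?_
    rw [hγ, show t = ⟨0, hq⟩ from e1.trans e2.symm, hγ0]
  obtain ⟨x₀, hx₀⟩ := hx
  -- permutation
  have hΓ' := hΓ
  simp only [ExistsUnique] at hΓ'
  choose T hT using hΓ'
  choose V hV using fun m => (hT m).1
  have hU : ∀ (m : Fin n → ℤ) (s : Fin q) (v : Fin n → ℤ),
      m = Γ s + Λ.mulVec v → s = T m := fun m s v hv => (hT m).2 s ⟨v, hv⟩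
  set σ : Fin q → Fin q := fun s => T (Γ s + x₀) with hσ
  have hσval : ∀ s, χ (Γ (σ s)) = χ x₀ * χ (Γ s) := by
    intro s
    have hdec := hV (Γ s + x₀)
    have h1 : χ (Γ s + x₀) = χ (Γ (σ s)) * χ (Λ.mulVec (V (Γ s + x₀))) := by
      rw [← hχadd, ← hdec]
    rw [hχΛ, mul_one] at h1
    rw [← h1, hχadd, mul_comm]
  have hσinj : Function.Injective σ := by
    intro s1 s2 hss
    simp only [hσ] at hss
    have h1 := hV (Γ s1 + x₀)
    have h2 := hV (Γ s2 + x₀)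
    rw [hss] at h1
    have h3 : Γ s1 = Γ s2 + Λ.mulVec (V (Γ s1 + x₀) - V (Γ s2 + x₀)) := by
      rw [Matrix.mulVec_sub]
      linear_combination (norm := module) h1 - h2
    have e1 : s1 = T (Γ s1) := hU _ s1 0 (by simp [Matrix.mulVec_zero])
    have e2 : s2 = T (Γ s1) := hU _ s2 _ h3
    exact e1.trans e2.symm
  have hσbij : Function.Bijective σ := Finite.injective_iff_bijective.mp hσinj
  have hsum1 : ∑ s, χ (Γ (σ s)) = ∑ s, χ (Γ s) := hσbij.sum_comp (fun s => χ (Γ s))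
  have hsum2 : ∑ s : Fin q, χ (Γ (σ s)) = χ x₀ * ∑ s : Fin q, χ (Γ s) := by
    rw [Finset.mul_sum]
    exact Finset.sum_congr rfl fun s _ => hσval s
  have hS0 : (χ x₀ - 1) * ∑ s : Fin q, χ (Γ s) = 0 := by
    rw [sub_mul, one_mul, ← hsum2, hsum1, sub_self]
  rcases mul_eq_zero.mp hS0 with h0 | h0
  · exact absurd (by linear_combination h0) hx₀
  · exact h0

lemma aux_alg {q J : ℕ} (a b δ r : ℂ) (H G e e' : Fin q → ℂ) (K L : Fin J → ℂ)
    (ha : a = ∑ m, r * e m * H m) (hb : b = ∑ m, r * e' m * G m)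
    (hsvp : 1 - ∑ m, H m * (starRingEnd ℂ) (G m) = ∑ j, K j * (starRingEnd ℂ) (L j))
    (hchar : ∑ m, (r * e m) * (starRingEnd ℂ) (r * e' m) = δ)
    (hrr : (starRingEnd ℂ) r = r) :
    a * (starRingEnd ℂ) b
      + (∑ j, (a * (starRingEnd ℂ) (L j)) * (starRingEnd ℂ) (b * (starRingEnd ℂ) (K j)))
      + (∑ m, (r * e m - a * (starRingEnd ℂ) (G m)) *
          (starRingEnd ℂ) (r * e' m - b * (starRingEnd ℂ) (H m)))
      = δ := by
  have h1 : (∑ j, (a * (starRingEnd ℂ) (L j)) * (starRingEnd ℂ) (b * (starRingEnd ℂ) (K j)))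
      = (a * (starRingEnd ℂ) b) * ∑ j, K j * (starRingEnd ℂ) (L j) := by
    rw [Finset.mul_sum]
    refine Finset.sum_congr rfl fun j _ => ?_
    simp only [map_mul, Complex.conj_conj]
    ring
  have h2 : ∀ m : Fin q, (r * e m - a * (starRingEnd ℂ) (G m)) *
      (starRingEnd ℂ) (r * e' m - b * (starRingEnd ℂ) (H m))
      = (r * e m) * (starRingEnd ℂ) (r * e' m)
        - ((starRingEnd ℂ) b) * (r * e m * H m)
        - a * (starRingEnd ℂ) (r * e' m * G m)
        + (a * (starRingEnd ℂ) b) * (H m * (starRingEnd ℂ) (G m)) := by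
    intro m
    simp only [map_sub, map_mul, Complex.conj_conj, hrr]
    ring
  rw [h1, Finset.sum_congr rfl fun m _ => h2 m]
  simp only [Finset.sum_add_distrib, Finset.sum_sub_distrib]
  rw [hchar, ← Finset.mul_sum, ← Finset.mul_sum, ← map_sum, ← Finset.mul_sum, ← ha, ← hb]
  linear_combination (-(a * (starRingEnd ℂ) b)) * hsvp

/-- Theorem 3.1 (SVP implies MUEP): if the lowpass filters `h, g` satisfy the SVP condition
with generators `k_j, l_j` vanishing at `1`, then the primal highpass filters
`ĥ_j(ω) = ĥ(ω) conj(l_j(e^{iΛᵀω}))`, `ĥ_{J+1+m}(ω) = q^{-1/2} e^{iν_m·ω} - ĥ(ω) conj(G_{ν_m}(e^{iΛᵀω}))`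
and the dual highpass filters (with the roles of `h, g` and `k, l` interchanged) satisfy the
MUEP condition `ĥ(ω) conj(ĝ(ω+γ)) + Σ_i ĥ_i(ω) conj(ĥ_i^d(ω+γ)) = δ_{0γ}`. -/
theorem stmt7 (n q J : ℕ) (hq : 0 < q) (Λ : Matrix (Fin n) (Fin n) ℤ)
    (hdet : Λ.det.natAbs = q)
    (Γ : Fin q → (Fin n → ℤ)) (γstar : Fin q → (Fin n → ℝ))
    (hΓ0 : Γ ⟨0, hq⟩ = 0) (hγ0 : γstar ⟨0, hq⟩ = 0)
    (hΓ : ∀ m : Fin n → ℤ, ∃! t : Fin q, ∃ v : Fin n → ℤ, m = Γ t + Λ.mulVec v)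
    (hmem : ∀ t : Fin q, ∃ m : Fin n → ℤ,
      ∀ i, ∑ j, (Λ.transpose i j : ℝ) * γstar t j = 2 * π * (m i))
    (hΓstar : ∀ x : Fin n → ℝ,
      (∃ m : Fin n → ℤ, ∀ i, ∑ j, (Λ.transpose i j : ℝ) * x j = 2 * π * (m i)) →
      ∃! t : Fin q, ∃ v : Fin n → ℤ, x = γstar t + fun i => 2 * π * (v i))
    (h g : (Fin n → ℤ) → ℝ)
    (hsupph : (Function.support h).Finite) (hsuppg : (Function.support g).Finite)
    -- h and g are lowpass filters:
    (hlowh : (∑ᶠ m : Fin n → ℤ, h m) = Real.sqrt q)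
    (hlowg : (∑ᶠ m : Fin n → ℤ, g m) = Real.sqrt q)
    -- standing assumption: the masks vanish at the nonzero elements of Γ*:
    (hvanh : ∀ t : Fin q, γstar t ≠ 0 → filterHat n q h (γstar t) = 0)
    (hvang : ∀ t : Fin q, γstar t ≠ 0 → filterHat n q g (γstar t) = 0)
    (k l : Fin J → (Fin n → ℂ) → ℂ)
    -- the SVP condition on the torus:
    (hSVP : ∀ z : Fin n → ℂ, (∀ i, ‖z i‖ = 1) →
      1 - ∑ t : Fin q, polyZ n Λ h (Γ t) z * (starRingEnd ℂ) (polyZ n Λ g (Γ t) z)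
        = ∑ j : Fin J, k j z * (starRingEnd ℂ) (l j z))
    (hk1 : ∀ j, k j (fun _ => 1) = 0) (hl1 : ∀ j, l j (fun _ => 1) = 0) :
    ∀ (ω : Fin n → ℝ) (t : Fin q),
      filterHat n q h ω * (starRingEnd ℂ) (filterHat n q g (fun i => ω i + γstar t i))
      + (∑ j : Fin J,
          (filterHat n q h ω * (starRingEnd ℂ) (l j (expVec n Λ ω))) *
            (starRingEnd ℂ) (filterHat n q g (fun i => ω i + γstar t i) *
              (starRingEnd ℂ) (k j (expVec n Λ (fun i => ω i + γstar t i)))))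
      + (∑ m : Fin q,
          ((1 / Real.sqrt q : ℝ) *
              Complex.exp (Complex.I * ((∑ i, (Γ m i : ℝ) * ω i : ℝ) : ℂ))
            - filterHat n q h ω * (starRingEnd ℂ) (polyZ n Λ g (Γ m) (expVec n Λ ω))) *
          (starRingEnd ℂ)
            ((1 / Real.sqrt q : ℝ) *
                Complex.exp (Complex.I *
                  ((∑ i, (Γ m i : ℝ) * (ω i + γstar t i) : ℝ) : ℂ))
              - filterHat n q g (fun i => ω i + γstar t i) *
                  (starRingEnd ℂ)
                    (polyZ n Λ h (Γ m) (expVec n Λ (fun i => ω i + γstar t i)))))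
      = if γstar t = 0 then 1 else 0 := by
  intro ω t
  have hd : Λ.det ≠ 0 := by
    intro h0
    rw [h0] at hdet
    simp at hdet
    omega
  have hF1 : expVec n Λ (fun i => ω i + γstar t i) = expVec n Λ ω :=
    aux_expVec_per Λ ω (γstar t) (hmem t)
  rw [hF1]
  set r : ℂ := ((1 / Real.sqrt q : ℝ) : ℂ) with hr
  have hrr : (starRingEnd ℂ) r = r := Complex.conj_ofReal _
  set e : Fin q → ℂ :=
    fun m => Complex.exp (Complex.I * ((∑ i, (Γ m i : ℝ) * ω i : ℝ) : ℂ)) with he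
  set e' : Fin q → ℂ :=
    fun m => Complex.exp (Complex.I * ((∑ i, (Γ m i : ℝ) * (ω i + γstar t i) : ℝ) : ℂ)) with he'
  have ha := aux_F2 hq Λ hd Γ hΓ h hsupph ω
  have hb := aux_F2 hq Λ hd Γ hΓ g hsuppg (fun i => ω i + γstar t i)
  rw [hF1] at hb
  have hsvp := hSVP (expVec n Λ ω) (fun i => aux_abs_expVec Λ ω i)
  have key : ∀ m : Fin q, (r * e m) * (starRingEnd ℂ) (r * e' m)
      = ((1 / (q : ℝ) : ℝ) : ℂ) *
          Complex.exp (-(Complex.I * ((∑ i, (Γ m i : ℝ) * γstar t i : ℝ) : ℂ))) := by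
    intro m
    have hc : (starRingEnd ℂ) (e' m) =
        Complex.exp (-(Complex.I * ((∑ i, (Γ m i : ℝ) * (ω i + γstar t i) : ℝ) : ℂ))) := by
      rw [he']
      rw [← Complex.exp_conj]
      congr 1
      simp [Complex.conj_ofReal]
    have hrmul : r * r = ((1 / (q : ℝ) : ℝ) : ℂ) := by
      rw [hr, ← Complex.ofReal_mul]
      congr 1
      rw [div_mul_div_comm, one_mul, Real.mul_self_sqrt (by positivity)]
    have hee : e m * (starRingEnd ℂ) (e' m) =
        Complex.exp (-(Complex.I * ((∑ i, (Γ m i : ℝ) * γstar t i : ℝ) : ℂ))) := by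
      rw [hc, he, ← Complex.exp_add]
      congr 1
      push_cast
      simp only [mul_add]
      rw [Finset.sum_add_distrib]
      ring
    rw [map_mul, hrr]
    calc (r * e m) * (r * (starRingEnd ℂ) (e' m))
        = (r * r) * (e m * (starRingEnd ℂ) (e' m)) := by ring
      _ = _ := by rw [hrmul, hee]
  have hchar : ∑ m : Fin q, (r * e m) * (starRingEnd ℂ) (r * e' m)
      = if γstar t = 0 then 1 else 0 := by
    rw [Finset.sum_congr rfl fun m _ => key m, ← Finset.mul_sum]
    by_cases h0 : γstar t = 0
    · rw [if_pos h0]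
      have : ∀ m : Fin q,
          Complex.exp (-(Complex.I * ((∑ i, (Γ m i : ℝ) * γstar t i : ℝ) : ℂ))) = 1 := by
        intro m
        rw [h0]
        simp
      rw [Finset.sum_congr rfl fun m _ => this m, Finset.sum_const, Finset.card_univ,
        Fintype.card_fin]
      push_cast
      rw [nsmul_eq_mul]
      have hqne : ((q : ℝ) : ℂ) ≠ 0 := by
        simp only [ne_eq, Complex.ofReal_eq_zero, Nat.cast_eq_zero]
        omega
      field_simp
      exact div_self (by exact_mod_cast hqne)
    · rw [if_neg h0, aux_char hq Λ Γ γstar hγ0 hΓ hmem hΓstar hd t h0, mul_zero]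
  exact aux_alg (filterHat n q h ω) (filterHat n q g (fun i => ω i + γstar t i))
    (if γstar t = 0 then 1 else 0) r
    (fun m => polyZ n Λ h (Γ m) (expVec n Λ ω))
    (fun m => polyZ n Λ g (Γ m) (expVec n Λ ω))
    e e' (fun j => k j (expVec n Λ ω)) (fun j => l j (expVec n Λ ω))
    ha hb hsvp hchar hrr
end

section
/- Let H(z) = (√2/32)·[16, −z^{−2} + 9z^{−1} + 9 − z]. Then 1 − H(z)H(z)* ≥ 0 for all z ∈ T (sub-QMF condition), where 1 − H(z)H(z)* is real for z ∈ T. -/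
open Complex

/-- The polyphase row vector of the Deslauriers–Dubuc order-4 lowpass filter. -/
noncomputable def H14 (z : ℂ) : Fin 2 → ℂ :=
  ![(Real.sqrt 2 / 32 : ℝ) * 16,
    (Real.sqrt 2 / 32 : ℝ) * (-z⁻¹ ^ 2 + 9 * z⁻¹ + 9 - z)]

/-- The sub-QMF condition of Example 3: `1 - H(z)H(z)*` is real and nonnegative on `T`,
where `H(z)* = H(z⁻¹)ᵀ`. -/
theorem stmt14 :
    ∀ z : ℂ, ‖z‖ = 1 →
      (1 - ∑ j : Fin 2, H14 z j * H14 z⁻¹ j).im = 0 ∧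
      0 ≤ (1 - ∑ j : Fin 2, H14 z j * H14 z⁻¹ j).re := by
  intro z hz1
  have hz0 : z ≠ 0 := by
    intro h; simp [h] at hz1
  have hc2 : ((Real.sqrt 2 / 32 : ℝ) : ℂ)^2 = 1/512 := by
    push_cast
    rw [div_pow]
    norm_num
    norm_cast
    rw [Real.sq_sqrt (by norm_num)]
    norm_num
  have key : (1 - ∑ j : Fin 2, H14 z j * H14 z⁻¹ j)
      = (2 - (z + z⁻¹))^2 * (14 - (z + z⁻¹)) / 512 := by
    simp only [H14, Fin.sum_univ_two, Matrix.cons_val_zero, Matrix.cons_val_one,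
      Matrix.head_cons, inv_inv]
    have expand : ((Real.sqrt 2 / 32 : ℝ) : ℂ) * 16 * (((Real.sqrt 2 / 32 : ℝ) : ℂ) * 16)
        + ((Real.sqrt 2 / 32 : ℝ) : ℂ) * (-z⁻¹ ^ 2 + 9 * z⁻¹ + 9 - z)
          * (((Real.sqrt 2 / 32 : ℝ) : ℂ) * (-z ^ 2 + 9 * z + 9 - z⁻¹))
        = ((Real.sqrt 2 / 32 : ℝ) : ℂ)^2
          * (256 + (-z⁻¹ ^ 2 + 9 * z⁻¹ + 9 - z) * (-z ^ 2 + 9 * z + 9 - z⁻¹)) := by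
      ring
    rw [expand, hc2]
    have h4 : z^4 * z⁻¹^4 = 1 := by
      rw [← mul_pow, mul_inv_cancel₀ hz0, one_pow]
    field_simp
    ring
  have hconj : z⁻¹ = (starRingEnd ℂ) z := by
    rw [Complex.inv_def]
    simp [Complex.normSq_eq_norm_sq, hz1]
  have hw : z + z⁻¹ = ((2 * z.re : ℝ) : ℂ) := by
    rw [hconj, Complex.add_conj]
  rw [key, hw]
  have hre : z.re ≤ 1 := by
    have := Complex.abs_re_le_norm z
    rw [hz1] at this
    exact le_trans (le_abs_self _) this
  constructor
  · norm_cast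
  · norm_cast
    have h2 : (0:ℝ) ≤ 14 - 2*z.re := by linarith
    positivity
end
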